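/- arXiv:2306.09693 — 2 statements merged into one kernel-verified Lean document; each statement's English description precedes it below -/
import Mathlib

section
/- Coherent matching fields for Gr(2,n) are in bijection with linear orders on {1,...,n} in the following sense: a matching field L for Gr(2,n) is coherent if and only if the relation a ≺ b defined by 'the tuple of L on {a,b} is (a,b)' is a strict total order on {1,...,n}. -/
/-- A matching field for Gr(2,n), encoded by the relation `L a b` := "the tuple of
`L` on `{a,b}` is `(a,b)`" (so for `a ≠ b` exactly one of `L a b`, `L b a` holds,
and `L a a` never holds), is coherent — i.e. induced by some weight matrix
`w ∈ ℝ^{2×n}` via `L a b ↔ w 1 a + w 2 b < w 1 b + w 2 a` — if and only if the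
relation `L` is a strict total order on `{1,…,n}`. -/
theorem stmt7 (n : ℕ) (L : Fin n → Fin n → Prop)
    (hmf : ∀ a b : Fin n, a ≠ b → (L a b ↔ ¬ L b a))
    (hirr : ∀ a : Fin n, ¬ L a a) :
    (∃ w : Fin 2 → Fin n → ℝ,
        ∀ a b : Fin n, a ≠ b → (L a b ↔ w 0 a + w 1 b < w 0 b + w 1 a)) ↔
      IsStrictTotalOrder (Fin n) L := by
  classical
  have tri : ∀ a b : Fin n, L a b ∨ a = b ∨ L b a := by
    intro a b
    rcases eq_or_ne a b with rfl | hab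
    · exact Or.inr (Or.inl rfl)
    · by_cases h : L a b
      · exact Or.inl h
      · exact Or.inr (Or.inr ((hmf b a hab.symm).mpr (by simpa using h)))
  constructor
  · rintro ⟨w, hw⟩
    have key : ∀ a b : Fin n, a ≠ b → (L a b ↔ w 0 a - w 1 a < w 0 b - w 1 b) := by
      intro a b hab
      rw [hw a b hab]
      constructor <;> intro h <;> linarith
    haveI : IsIrrefl (Fin n) L := ⟨hirr⟩
    haveI : IsTrans (Fin n) L := by
      constructor
      intro a b c hab hbc
      have hab' : a ≠ b := by rintro rfl; exact hirr a hab
      have hbc' : b ≠ c := by rintro rfl; exact hirr b hbc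
      rcases eq_or_ne a c with rfl | hac
      · exact absurd hbc ((hmf a b hab').mp hab)
      · have h1 := (key a b hab').mp hab
        have h2 := (key b c hbc').mp hbc
        exact (key a c hac).mpr (by linarith)
    haveI : IsTrichotomous (Fin n) L := ⟨fun a b h1 h2 => ((tri a b).resolve_left h1).resolve_right h2⟩
    haveI : IsStrictOrder (Fin n) L := ⟨⟩
    exact ⟨⟩
  · intro h
    set f : Fin n → ℝ := fun a => ((Finset.univ.filter (fun x => L x a)).card : ℝ) with hf
    have mono : ∀ a b : Fin n, L a b → f a < f b := by
      intro a b hab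
      have hab' : a ≠ b := by rintro rfl; exact hirr a hab
      have hsub : Finset.univ.filter (fun x => L x a) ⊂ Finset.univ.filter (fun x => L x b) := by
        constructor
        · intro x hx
          simp only [Finset.mem_filter, Finset.mem_univ, true_and] at hx ⊢
          exact h.trans x a b hx hab
        · intro hsub
          have : a ∈ Finset.univ.filter (fun x => L x b) := by
            simp [hab]
          have := hsub this
          simp only [Finset.mem_filter, Finset.mem_univ, true_and] at this
          exact hirr a this
      have hc := Finset.card_lt_card hsub
      simp only [hf]
      exact_mod_cast hc
    refine ⟨![f, 0], ?_⟩
    intro a b hab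
    simp only [Matrix.cons_val_zero, Matrix.cons_val_one, Matrix.head_cons, Pi.zero_apply,
      add_zero]
    constructor
    · exact mono a b
    · intro hlt
      rcases tri a b with h1 | h1 | h1
      · exact h1
      · exact absurd h1 hab
      · exact absurd (mono b a h1) (by linarith)
end

section
/- The diagonal matching field for Gr(k,n) is linkage: for every (k+1)-subset S of {1,...,n}, the bipartite graph on vertex sets {1,...,n} and {1,...,k} whose edge set is the union over all k-subsets I ⊆ S of the edges {(i_a, a) : a = 1,...,k}, where (i_1 < ... < i_k) is the increasing ordering of I, is a forest (contains no cycle). -/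
open SimpleGraph Walk Finset

private lemma cycle_aux {V : Type*} {G : SimpleGraph V} (f : V → ℤ)
    (hinj : Function.Injective f)
    (hadj : ∀ u v, G.Adj u v → f u = f v + 1 ∨ f v = f u + 1) :
    ∀ (u : V) (c : G.Walk u u), c.IsCycle → (∀ w ∈ c.support, f w ≤ f u) → False := by
  intro u c hc hmax
  cases c with
  | nil => exact hc.ne_nil rfl
  | @cons _ w _ h p =>
    obtain ⟨x, q, h', hcq⟩ := SimpleGraph.Walk.exists_cons_eq_concat h p
    have hw : w ∈ (SimpleGraph.Walk.cons h p).support := by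
      rw [SimpleGraph.Walk.support_cons]
      exact List.mem_cons_of_mem _ p.start_mem_support
    have hx : x ∈ (SimpleGraph.Walk.cons h p).support := by
      rw [hcq, SimpleGraph.Walk.support_concat]
      simp only [List.concat_eq_append, List.mem_append]
      exact Or.inl q.end_mem_support
    have h1 : f u = f w + 1 := by
      rcases hadj _ _ h with h1 | h1
      · exact h1
      · have := hmax w hw; omega
    have h2 : f u = f x + 1 := by
      rcases hadj _ _ h' with h2 | h2
      · have := hmax x hx; omega
      · exact h2
    have hwx : x = w := hinj (by omega)
    subst hwx
    cases q with
    | nil => exact h.ne rfl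
    | @cons _ y _ h3 r =>
      have hsup := congrArg SimpleGraph.Walk.support hcq
      rw [SimpleGraph.Walk.support_cons, SimpleGraph.Walk.support_concat,
        SimpleGraph.Walk.support_cons] at hsup
      simp only [List.concat_eq_append, List.cons_append, List.cons.injEq, true_and] at hsup
      -- hsup : p.support = r.support ++ [u]
      have hy : y = x := by
        have h0 := hsup
        rw [SimpleGraph.Walk.support_eq_cons p, SimpleGraph.Walk.support_eq_cons r] at h0
        simp only [List.cons_append, List.cons.injEq] at h0
        exact h0.1.symm
      subst hy
      cases r with
      | nil =>
        have h3l := hc.three_le_length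
        have hl := congrArg List.length hsup
        simp only [SimpleGraph.Walk.length_support, SimpleGraph.Walk.support_nil,
          List.length_append, List.length_cons, List.length_nil] at hl
        rw [SimpleGraph.Walk.length_cons] at h3l
        omega
      | @cons _ z _ h4 s =>
        have hnodup : p.support.Nodup := by
          have := hc.support_nodup
          rwa [SimpleGraph.Walk.support_cons, List.tail_cons] at this
        rw [hsup, SimpleGraph.Walk.support_cons] at hnodup
        simp only [List.cons_append, List.nodup_cons, List.mem_append] at hnodup
        exact hnodup.1 (Or.inl s.end_mem_support)

private lemma acyclic_of_grading {V : Type*} {G : SimpleGraph V} (f : V → ℤ)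
    (hinj : Function.Injective f)
    (hadj : ∀ u v, G.Adj u v → f u = f v + 1 ∨ f v = f u + 1) : G.IsAcyclic := by
  classical
  intro v c hc
  obtain ⟨u, hu, hmax⟩ := c.support.toFinset.exists_max_image f
    ⟨v, List.mem_toFinset.mpr c.start_mem_support⟩
  have hu' : u ∈ c.support := List.mem_toFinset.mp hu
  refine cycle_aux f hinj hadj u (c.rotate u hu') (hc.rotate hu') (fun w hw => ?_)
  have : w ∈ c.support := by
    rw [SimpleGraph.Walk.support_eq_cons] at hw
    rcases List.mem_cons.mp hw with rfl | hw'
    · exact hu'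
    · exact List.mem_of_mem_tail ((SimpleGraph.Walk.support_rotate c u hu').mem_iff.mp hw')
  exact hmax w (List.mem_toFinset.mpr this)

private lemma card_filter_lt_emb {n k : ℕ} (I : Finset (Fin n)) (hI : I.card = k) (a : Fin k) :
    (I.filter (· < I.orderEmbOfFin hI a)).card = a := by
  have himg : I.filter (· < I.orderEmbOfFin hI a) = (Finset.Iio a).image (I.orderEmbOfFin hI) := by
    ext y
    simp only [Finset.mem_filter, Finset.mem_image, Finset.mem_Iio]
    constructor
    · rintro ⟨hyI, hylt⟩
      have : y ∈ Set.range (I.orderEmbOfFin hI) := by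
        rw [Finset.range_orderEmbOfFin]; exact hyI
      obtain ⟨b, rfl⟩ := this
      exact ⟨b, (I.orderEmbOfFin hI).lt_iff_lt.mp hylt, rfl⟩
    · rintro ⟨b, hb, rfl⟩
      exact ⟨Finset.orderEmbOfFin_mem I hI b, (I.orderEmbOfFin hI).lt_iff_lt.mpr hb⟩
  rw [himg, Finset.card_image_of_injective _ (I.orderEmbOfFin hI).injective, Fin.card_Iio]

private lemma cnt_sandwich {n k : ℕ} {S I : Finset (Fin n)} (hIS : I ⊆ S)
    (hS : S.card = k + 1) (hI : I.card = k) (x : Fin n) :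
    (I.filter (· < x)).card ≤ (S.filter (· < x)).card ∧
    (S.filter (· < x)).card ≤ (I.filter (· < x)).card + 1 := by
  constructor
  · exact Finset.card_le_card (Finset.filter_subset_filter _ hIS)
  · have h1 : S.filter (· < x) ⊆ I.filter (· < x) ∪ (S \ I) := by
      intro y hy
      simp only [Finset.mem_filter, Finset.mem_union, Finset.mem_sdiff] at *
      by_cases hyI : y ∈ I
      · exact Or.inl ⟨hyI, hy.2⟩
      · exact Or.inr ⟨hy.1, hyI⟩
    have hsd : (S \ I).card = 1 := by rw [Finset.card_sdiff_of_subset hIS, hS, hI]; omega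
    have h2 := Finset.card_union_le (I.filter (· < x)) (S \ I)
    have h3 := Finset.card_le_card h1
    omega

private lemma cnt_strict {n : ℕ} {S : Finset (Fin n)} {x y : Fin n} (hx : x ∈ S)
    (hxy : x < y) : (S.filter (· < x)).card < (S.filter (· < y)).card := by
  apply Finset.card_lt_card
  rw [Finset.ssubset_def]
  constructor
  · intro z hz
    simp only [Finset.mem_filter] at hz ⊢
    exact ⟨hz.1, lt_trans hz.2 hxy⟩
  · intro hsub
    have hmem : x ∈ S.filter (· < y) := Finset.mem_filter.mpr ⟨hx, hxy⟩
    have h0 := hsub hmem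
    simp only [Finset.mem_filter] at h0
    exact lt_irrefl x h0.2

private lemma cnt_inj {n : ℕ} {S : Finset (Fin n)} {x y : Fin n} (hx : x ∈ S) (hy : y ∈ S)
    (h : (S.filter (· < x)).card = (S.filter (· < y)).card) : x = y := by
  by_contra hne
  rcases lt_or_gt_of_ne hne with hlt | hlt
  · exact absurd h (Nat.ne_of_lt (cnt_strict hx hlt))
  · exact absurd h.symm (Nat.ne_of_lt (cnt_strict hy hlt))

/-- The diagonal matching field for Gr(k,n) is linkage: for every `(k+1)`-subset `S`
of `{1,…,n}`, the bipartite graph on `{1,…,n} ⊔ {1,…,k}` whose edges are the union,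
over all `k`-subsets `I ⊆ S`, of the edges `(i_a, a)` (where `i_1 < … < i_k` is the
increasing ordering of `I`), is a forest. -/
theorem stmt12 (k n : ℕ) (hk : 1 ≤ k) (hkn : k < n)
    (S : Finset (Fin n)) (hS : S.card = k + 1)
    (G : SimpleGraph (Fin n ⊕ Fin k))
    (hG : G = SimpleGraph.fromRel (fun u v =>
      ∃ (I : Finset (Fin n)) (hI : I.card = k) (a : Fin k),
        I ⊆ S ∧ u = Sum.inl ((I.orderIsoOfFin hI a : Fin n)) ∧ v = Sum.inr a)) :
    G.IsAcyclic := by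
  classical
  subst hG
  apply acyclic_of_grading (f := Sum.elim
    (fun x : Fin n => if x ∈ S then (2 * ((S.filter (· < x)).card : ℤ)) else -((x : ℕ) + 1))
    (fun a : Fin k => 2 * (a : ℕ) + 1))
  · rintro (x | a) (y | b) hxy <;>
      simp only [Sum.elim_inl, Sum.elim_inr] at hxy
    · by_cases hx : x ∈ S <;> by_cases hy : y ∈ S
      · rw [if_pos hx, if_pos hy] at hxy
        exact congrArg Sum.inl (cnt_inj hx hy (by omega))
      · rw [if_pos hx, if_neg hy] at hxy; exfalso; omega
      · rw [if_neg hx, if_pos hy] at hxy; exfalso; omega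
      · rw [if_neg hx, if_neg hy] at hxy
        exact congrArg Sum.inl (Fin.ext (by omega))
    · exfalso; split at hxy <;> omega
    · exfalso; split at hxy <;> omega
    · exact congrArg Sum.inr (Fin.ext (by omega))
  · intro u v huv
    rw [SimpleGraph.fromRel_adj] at huv
    obtain ⟨hne, hrel⟩ := huv
    have key : ∀ (I : Finset (Fin n)) (hI : I.card = k) (a : Fin k), I ⊆ S →
        (Sum.elim
          (fun x : Fin n => if x ∈ S then (2 * ((S.filter (· < x)).card : ℤ)) else -((x : ℕ) + 1))
          (fun a : Fin k => 2 * (a : ℕ) + 1)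
          (Sum.inl ((I.orderIsoOfFin hI a : Fin n))) = 2 * (a : ℕ) ∨
         Sum.elim
          (fun x : Fin n => if x ∈ S then (2 * ((S.filter (· < x)).card : ℤ)) else -((x : ℕ) + 1))
          (fun a : Fin k => 2 * (a : ℕ) + 1)
          (Sum.inl ((I.orderIsoOfFin hI a : Fin n))) = 2 * (a : ℕ) + 2) := by
      intro I hI a hIS
      have hcoe : ((I.orderIsoOfFin hI a : Fin n)) = I.orderEmbOfFin hI a :=
        Finset.coe_orderIsoOfFin_apply I hI a
      set x := I.orderEmbOfFin hI a with hxdef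
      have hxS : x ∈ S := hIS (Finset.orderEmbOfFin_mem I hI a)
      have hcntI : (I.filter (· < x)).card = a := card_filter_lt_emb I hI a
      have hsw := cnt_sandwich hIS hS hI x
      rw [hcoe]
      simp only [Sum.elim_inl, if_pos hxS]
      omega
    rcases hrel with ⟨I, hI, a, hIS, hu, hv⟩ | ⟨I, hI, a, hIS, hv, hu⟩
    · subst hu; subst hv
      rcases key I hI a hIS with h | h <;> rw [h] <;> simp only [Sum.elim_inr] <;>
        first | exact Or.inr trivial | exact Or.inl trivial | omega
    · subst hu; subst hv
      rcases key I hI a hIS with h | h <;> rw [h] <;> simp only [Sum.elim_inr] <;>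
        first | exact Or.inr trivial | exact Or.inl trivial | omega
end
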